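/- Under the hypotheses of the Sewing Lemma, assume in addition that |(δ̂₂Ξ)_{vmu}| ≤ c₃ u^{−β'} (v−u)^{ρ'} for all 0 < u ≤ m ≤ v ≤ T, where 0 ≤ β' ≤ 1, ρ' > 1 and ρ' − β' ≤ ρ − β. Then there is a constant C, depending only on c_S, α, β, β', ρ, ρ' and T, such that |(δ̂IΞ)_{ts} − Ξ_{ts}| ≤ C (c₂ + c₃) s^{−β'} (t−s)^{ρ'} for all 0 < s ≤ t ≤ T. -/

import Mathlib

set_option maxRecDepth 10000 in
set_option maxHeartbeats 1000000 in
/-- Additional estimate for the sewing map under a second bound on `δ̂₂Ξ`. -/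
theorem sewing_lemma_additional_estimate
    {W : Type*} [NormedAddCommGroup W] [NormedSpace ℝ W] [CompleteSpace W]
    (T : ℝ) (hT : 0 < T)
    (S : ℝ → W →L[ℝ] W)
    (hS0 : S 0 = ContinuousLinearMap.id ℝ W)
    (hSadd : ∀ t s : ℝ, 0 ≤ t → 0 ≤ s → S (t + s) = (S t).comp (S s))
    (cS : ℝ) (hScS : ∀ t : ℝ, 0 ≤ t → t ≤ T → ‖S t‖ ≤ cS)
    (Ξ : ℝ → ℝ → W)
    (hΞcont : ContinuousOn (fun p : ℝ × ℝ => Ξ p.1 p.2)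
      {p : ℝ × ℝ | 0 ≤ p.2 ∧ p.2 ≤ p.1 ∧ p.1 ≤ T})
    (c₁ c₂ c₃ α β β' ρ ρ' : ℝ) (hc₁ : 0 ≤ c₁) (hc₂ : 0 ≤ c₂) (hc₃ : 0 ≤ c₃)
    (hα0 : 0 ≤ α) (hα1 : α ≤ 1) (hβ0 : 0 ≤ β) (hβ1 : β ≤ 1) (hρ : 1 < ρ)
    (hαβρ : α + β ≤ ρ)
    (hβ'0 : 0 ≤ β') (hβ'1 : β' ≤ 1) (hρ' : 1 < ρ') (hρρ' : ρ' - β' ≤ ρ - β)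
    (hΞ1 : ∀ u v : ℝ, 0 ≤ u → u ≤ v → v ≤ T → ‖Ξ v u‖ ≤ c₁ * (v - u) ^ α)
    (hΞ2 : ∀ u m v : ℝ, 0 < u → u ≤ m → m ≤ v → v ≤ T →
      ‖Ξ v u - Ξ v m - S (v - m) (Ξ m u)‖ ≤ c₂ * u ^ (-β) * (v - u) ^ ρ)
    (hΞ3 : ∀ u m v : ℝ, 0 < u → u ≤ m → m ≤ v → v ≤ T →
      ‖Ξ v u - Ξ v m - S (v - m) (Ξ m u)‖ ≤ c₃ * u ^ (-β') * (v - u) ^ ρ')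
    -- `I` is the sewing map of `Ξ` provided by the Sewing Lemma:
    (I : ℝ → W) (hIcont : ContinuousOn I (Set.Icc 0 T)) (hI0 : I 0 = 0)
    (CI : ℝ)
    (hIbd1 : ∀ s t : ℝ, 0 ≤ s → s ≤ t → t ≤ T →
      ‖I t - S (t - s) (I s)‖ ≤ CI * (c₁ + c₂) * (t - s) ^ α)
    (hIbd2 : ∀ s t : ℝ, 0 < s → s ≤ t → t ≤ T →
      ‖I t - S (t - s) (I s) - Ξ t s‖ ≤ CI * c₂ * s ^ (-β) * (t - s) ^ ρ) :
    ∃ C : ℝ, 0 ≤ C ∧ ∀ s t : ℝ, 0 < s → s ≤ t → t ≤ T →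
      ‖I t - S (t - s) (I s) - Ξ t s‖ ≤ C * (c₂ + c₃) * s ^ (-β') * (t - s) ^ ρ' := by
  classical
  set K := max cS 1 with hKdef
  have hK1 : (1:ℝ) ≤ K := le_max_right _ _
  have hK0 : (0:ℝ) ≤ K := by linarith
  have hSK : ∀ r : ℝ, 0 ≤ r → r ≤ T → ∀ x : W, ‖S r x‖ ≤ K * ‖x‖ := by
    intro r hr hrT x
    calc ‖S r x‖ ≤ ‖S r‖ * ‖x‖ := (S r).le_opNorm x
      _ ≤ K * ‖x‖ :=
        mul_le_mul_of_nonneg_right ((hScS r hr hrT).trans (le_max_left _ _)) (norm_nonneg x)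
  have hCIc₂ : 0 ≤ CI * c₂ := by
    have h := hIbd2 (T / 2) T (by linarith) (by linarith) le_rfl
    have h0 := (norm_nonneg (I T - S (T - T / 2) (I (T / 2)) - Ξ T (T / 2))).trans h
    have hp1 : 0 < (T / 2) ^ (-β) := Real.rpow_pos_of_pos (by linarith) _
    have hp2 : 0 < (T - T / 2) ^ ρ := Real.rpow_pos_of_pos (by linarith) _
    nlinarith [mul_pos hp1 hp2]
  set q := (2:ℝ) ^ (1 - ρ) with hqdef
  set g := (2:ℝ) ^ (1 - ρ') with hgdef
  have hq0 : 0 < q := Real.rpow_pos_of_pos two_pos _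
  have hq1 : q < 1 := Real.rpow_lt_one_of_one_lt_of_neg one_lt_two (by linarith)
  have hg0 : 0 < g := Real.rpow_pos_of_pos two_pos _
  have hg1 : g < 1 := Real.rpow_lt_one_of_one_lt_of_neg one_lt_two (by linarith)
  set G := (1 - g)⁻¹ with hGdef
  have hG0 : 0 < G := inv_pos.2 (by linarith)
  have hGg : G * g + 1 = G := by
    rw [hGdef]
    have h1g : (1:ℝ) - g ≠ 0 := by linarith
    field_simp
    ring
  have hR0 : (0:ℝ) < (2:ℝ) ^ ρ := Real.rpow_pos_of_pos two_pos _
  have hR'0 : (0:ℝ) < (2:ℝ) ^ ρ' := Real.rpow_pos_of_pos two_pos _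
  have hqe : q * (2:ℝ) ^ ρ = 2 := by
    rw [hqdef, ← Real.rpow_add two_pos]
    norm_num
  have hge : g * (2:ℝ) ^ ρ' = 2 := by
    rw [hgdef, ← Real.rpow_add two_pos]
    norm_num
  have hGR : G * (2:ℝ) ^ ρ' = 2 * G + (2:ℝ) ^ ρ' := by
    linear_combination G * hge - ((2:ℝ) ^ ρ') * hGg
  have key : ∀ n : ℕ, ∀ t₀ s t : ℝ, 0 < s → s ≤ t → t ≤ t₀ → t₀ ≤ T →
      ‖S (t₀ - t) (I t - S (t - s) (I s) - Ξ t s)‖ ≤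
        K * (CI * c₂) * q ^ n * s ^ (-β) * (t - s) ^ ρ
        + K * c₃ * G * s ^ (-β') * (t - s) ^ ρ' := by
    intro n
    induction n with
    | zero =>
      intro t₀ s t hs hst htt₀ ht₀T
      have hb := hIbd2 s t hs hst (htt₀.trans ht₀T)
      have hb2 := hSK (t₀ - t) (by linarith) (by linarith) (I t - S (t - s) (I s) - Ξ t s)
      have h1 : ‖S (t₀ - t) (I t - S (t - s) (I s) - Ξ t s)‖ ≤
          K * (CI * c₂ * s ^ (-β) * (t - s) ^ ρ) :=
        hb2.trans (mul_le_mul_of_nonneg_left hb hK0)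
      have h2 : (0:ℝ) ≤ K * c₃ * G * s ^ (-β') * (t - s) ^ ρ' := by
        have hp1 := Real.rpow_nonneg hs.le (-β')
        have hp2 := Real.rpow_nonneg (sub_nonneg.2 hst) ρ'
        positivity
      rw [pow_zero]
      nlinarith [h1, h2]
    | succ n ih =>
      intro t₀ s t hs hst htt₀ ht₀T
      set m := (s + t) / 2 with hmdef
      have hsm : s ≤ m := by rw [hmdef]; linarith
      have hmt : m ≤ t := by rw [hmdef]; linarith
      have hm0 : 0 < m := lt_of_lt_of_le hs hsm
      have htT : t ≤ T := htt₀.trans ht₀T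
      have hcomp : ∀ y : W, S (t₀ - t) (S (t - m) y) = S (t₀ - m) y := by
        intro y
        have h := hSadd (t₀ - t) (t - m) (by linarith) (by linarith)
        have he : t₀ - t + (t - m) = t₀ - m := by ring
        rw [he] at h
        rw [h, ContinuousLinearMap.comp_apply]
      have hcomp2 : S (t - m) (S (m - s) (I s)) = S (t - s) (I s) := by
        have h := hSadd (t - m) (m - s) (by linarith) (by linarith)
        have he : t - m + (m - s) = t - s := by ring
        rw [he] at h
        rw [h, ContinuousLinearMap.comp_apply]
      have hexp : S (t - m) (I m - S (m - s) (I s) - Ξ m s)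
          = S (t - m) (I m) - S (t - s) (I s) - S (t - m) (Ξ m s) := by
        rw [map_sub, map_sub, hcomp2]
      have hXid : I t - S (t - s) (I s) - Ξ t s
          = (I t - S (t - m) (I m) - Ξ t m)
            + S (t - m) (I m - S (m - s) (I s) - Ξ m s)
            - (Ξ t s - Ξ t m - S (t - m) (Ξ m s)) := by
        rw [hexp]
        abel
      have hmain : S (t₀ - t) (I t - S (t - s) (I s) - Ξ t s)
          = S (t₀ - t) (I t - S (t - m) (I m) - Ξ t m)
            + S (t₀ - m) (I m - S (m - s) (I s) - Ξ m s)
            - S (t₀ - t) (Ξ t s - Ξ t m - S (t - m) (Ξ m s)) := by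
        conv_lhs => rw [hXid]
        rw [map_sub, map_add, hcomp]
      have h1 := ih t₀ m t hm0 hmt htt₀ ht₀T
      have h2 := ih t₀ s m hs hsm (hmt.trans htt₀) ht₀T
      have hD := hΞ3 s m t hs hsm hmt htT
      have h3 : ‖S (t₀ - t) (Ξ t s - Ξ t m - S (t - m) (Ξ m s))‖ ≤
          K * (c₃ * s ^ (-β') * (t - s) ^ ρ') :=
        (hSK (t₀ - t) (by linarith) (by linarith) _).trans
          (mul_le_mul_of_nonneg_left hD hK0)
      have htri : ‖S (t₀ - t) (I t - S (t - s) (I s) - Ξ t s)‖ ≤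
          ‖S (t₀ - t) (I t - S (t - m) (I m) - Ξ t m)‖
          + ‖S (t₀ - m) (I m - S (m - s) (I s) - Ξ m s)‖
          + ‖S (t₀ - t) (Ξ t s - Ξ t m - S (t - m) (Ξ m s))‖ := by
        rw [hmain]
        exact (norm_sub_le _ _).trans (add_le_add_left (norm_add_le _ _) _)
      have hmb : m ^ (-β) ≤ s ^ (-β) :=
        Real.rpow_le_rpow_of_nonpos hs hsm (by linarith)
      have hmb' : m ^ (-β') ≤ s ^ (-β') :=
        Real.rpow_le_rpow_of_nonpos hs hsm (by linarith)
      have htm : t - m = (t - s) / 2 := by rw [hmdef]; ring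
      have hms : m - s = (t - s) / 2 := by rw [hmdef]; ring
      have hE2 : ((t - s) / 2) ^ ρ * (2:ℝ) ^ ρ = (t - s) ^ ρ := by
        rw [← Real.mul_rpow (by linarith) (by norm_num)]
        norm_num
      have hE2' : ((t - s) / 2) ^ ρ' * (2:ℝ) ^ ρ' = (t - s) ^ ρ' := by
        rw [← Real.mul_rpow (by linarith) (by norm_num)]
        norm_num
      have hE20 : (0:ℝ) ≤ ((t - s) / 2) ^ ρ := Real.rpow_nonneg (by linarith) _
      have hE2'0 : (0:ℝ) ≤ ((t - s) / 2) ^ ρ' := Real.rpow_nonneg (by linarith) _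
      have hP'0 : (0:ℝ) ≤ s ^ (-β') := Real.rpow_nonneg hs.le _
      have hA0 : (0:ℝ) ≤ K * (CI * c₂) * q ^ n := by positivity
      have h1' : ‖S (t₀ - t) (I t - S (t - m) (I m) - Ξ t m)‖ ≤
          K * (CI * c₂) * q ^ n * s ^ (-β) * ((t - s) / 2) ^ ρ
          + K * c₃ * G * s ^ (-β') * ((t - s) / 2) ^ ρ' := by
        refine h1.trans ?_
        rw [htm]
        refine add_le_add ?_ ?_
        · exact mul_le_mul_of_nonneg_right (mul_le_mul_of_nonneg_left hmb hA0) hE20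
        · exact mul_le_mul_of_nonneg_right
            (mul_le_mul_of_nonneg_left hmb' (by positivity)) hE2'0
      have h2' : ‖S (t₀ - m) (I m - S (m - s) (I s) - Ξ m s)‖ ≤
          K * (CI * c₂) * q ^ n * s ^ (-β) * ((t - s) / 2) ^ ρ
          + K * c₃ * G * s ^ (-β') * ((t - s) / 2) ^ ρ' := by
        refine h2.trans ?_
        rw [hms]
      have heq : (K * (CI * c₂) * q ^ n * s ^ (-β) * ((t - s) / 2) ^ ρ
            + K * c₃ * G * s ^ (-β') * ((t - s) / 2) ^ ρ')
          + (K * (CI * c₂) * q ^ n * s ^ (-β) * ((t - s) / 2) ^ ρ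
            + K * c₃ * G * s ^ (-β') * ((t - s) / 2) ^ ρ')
          + K * (c₃ * s ^ (-β') * (t - s) ^ ρ')
          = K * (CI * c₂) * q ^ (n + 1) * s ^ (-β) * (t - s) ^ ρ
            + K * c₃ * G * s ^ (-β') * (t - s) ^ ρ' := by
        rw [← hE2, ← hE2', pow_succ]
        linear_combination (-(K * (CI * c₂) * q ^ n * s ^ (-β) * ((t - s) / 2) ^ ρ)) * hqe
          - (K * c₃ * s ^ (-β') * ((t - s) / 2) ^ ρ') * hGR
      linarith [htri, h1', h2', h3, heq.le]
  refine ⟨K * G, by positivity, ?_⟩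
  intro s t hs hst htT
  have hbound : ∀ n : ℕ, ‖I t - S (t - s) (I s) - Ξ t s‖ ≤
      (K * (CI * c₂) * s ^ (-β) * (t - s) ^ ρ) * q ^ n
      + K * c₃ * G * s ^ (-β') * (t - s) ^ ρ' := by
    intro n
    have h := key n t s t hs hst le_rfl htT
    rw [sub_self, hS0, ContinuousLinearMap.id_apply] at h
    linarith [h, le_of_eq (by ring :
      K * (CI * c₂) * q ^ n * s ^ (-β) * (t - s) ^ ρ
      = (K * (CI * c₂) * s ^ (-β) * (t - s) ^ ρ) * q ^ n)]
  have hlim : Filter.Tendsto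
      (fun n : ℕ => (K * (CI * c₂) * s ^ (-β) * (t - s) ^ ρ) * q ^ n
        + K * c₃ * G * s ^ (-β') * (t - s) ^ ρ') Filter.atTop
      (nhds ((K * (CI * c₂) * s ^ (-β) * (t - s) ^ ρ) * 0
        + K * c₃ * G * s ^ (-β') * (t - s) ^ ρ')) :=
    (((tendsto_pow_atTop_nhds_zero_of_lt_one hq0.le hq1).const_mul _).add_const _)
  have hfin : ‖I t - S (t - s) (I s) - Ξ t s‖ ≤
      (K * (CI * c₂) * s ^ (-β) * (t - s) ^ ρ) * 0
      + K * c₃ * G * s ^ (-β') * (t - s) ^ ρ' :=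
    ge_of_tendsto' hlim hbound
  have hP'0 : (0:ℝ) ≤ s ^ (-β') := Real.rpow_nonneg hs.le _
  have hE'0 : (0:ℝ) ≤ (t - s) ^ ρ' := Real.rpow_nonneg (by linarith) _
  nlinarith [hfin, mul_nonneg (mul_nonneg (mul_nonneg hK0 hG0.le) hc₂) (mul_nonneg hP'0 hE'0)]
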